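/- Let n ≥ 3, let a_1,…,a_n > 0, let A_n be the diagonal matrix with diagonal entries a_1,…,a_n, and let C_n be the periodic chain matrix. Then the matrix A_nC_n has the eigenvalue 0 with one-dimensional eigenspace spanned by (1,1,…,1), its remaining n−1 eigenvalues (counted with algebraic multiplicity) are real and positive, and A_nC_n is diagonalizable, i.e. for every eigenvalue the geometric multiplicity equals the algebraic multiplicity. -/

import Mathlib

open Matrix Polynomial

/-- The periodic chain matrix `C_n`: `2` on the diagonal, `-1` at positions
`(i, i+1)` and `(i, i-1)` with indices modulo `n`, and `0` elsewhere. -/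
def pchain (n : ℕ) [NeZero n] : Matrix (Fin n) (Fin n) ℝ :=
  Matrix.of fun i j => if i = j then 2 else if j = i + 1 ∨ i = j + 1 then -1 else 0

section Aux

variable {n : ℕ} [NeZero n]
open Fin.CommRing

lemma fin1_ne (hn : 3 ≤ n) : (1 : Fin n) ≠ 0 := by
  have : ((1 : Fin n) : ℕ) = 1 % n := Fin.val_one' n
  intro h
  rw [h] at this
  simp [Nat.mod_eq_of_lt (by omega : 1 < n)] at this

lemma fin2_ne (hn : 3 ≤ n) : (2 : Fin n) ≠ 0 := by
  have h2 : ((2 : ℕ) : Fin n) = (2 : Fin n) := by norm_cast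
  have : (((2:ℕ) : Fin n) : ℕ) = 2 % n := Fin.val_natCast 2 n
  rw [h2] at this
  intro h
  rw [h] at this
  simp [Nat.mod_eq_of_lt (by omega : 2 < n)] at this

lemma fin_succ_ne (hn : 3 ≤ n) (i : Fin n) : i + 1 ≠ i := by
  intro h; exact fin1_ne hn (by linear_combination h)

lemma fin_pred_ne (hn : 3 ≤ n) (i : Fin n) : i - 1 ≠ i := by
  intro h; exact fin1_ne hn (by linear_combination -h)

lemma fin_sp_ne (hn : 3 ≤ n) (i : Fin n) : i + 1 ≠ i - 1 := by
  intro h; exact fin2_ne hn (by linear_combination h)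

lemma pchain_mulVec (hn : 3 ≤ n) (v : Fin n → ℝ) (i : Fin n) :
    (pchain n *ᵥ v) i = 2 * v i - v (i + 1) - v (i - 1) := by
  have h1 := fin_succ_ne hn i
  have h2 := fin_pred_ne hn i
  have h3 := fin_sp_ne hn i
  have hd : (pchain n *ᵥ v) i = ∑ j, pchain n i j * v j := rfl
  rw [hd]
  have key : ∀ j, pchain n i j * v j =
      (if j = i then 2 * v j else 0) +
      ((if j = i + 1 then -v j else 0) + (if j = i - 1 then -v j else 0)) := by
    intro j
    by_cases hj1 : j = i
    · subst hj1
      have ha : j ≠ j + 1 := fun h => h1 h.symm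
      simp [pchain, Ne.symm h1, Ne.symm h2, ha]
    · by_cases hj2 : j = i + 1
      · subst hj2
        have hb : i ≠ (i+1) + 1 := by
          intro h; exact fin2_ne hn (by linear_combination -h)
        have hne1 : n ≠ 1 := by omega
        simp [pchain, Ne.symm hj1, hb, h3, hne1]
      · by_cases hj3 : j = i - 1
        · subst hj3
          have hcond : (i - 1 = i + 1 ∨ i = (i - 1) + 1) := Or.inr (by ring)
          simp [pchain, Ne.symm h2, hcond, Ne.symm h3, h2]
        · have hi1 : i ≠ j + 1 := by
            intro h; exact hj3 (by linear_combination -h)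
          simp [pchain, hj1, Ne.symm hj1, hj2, hj3, hi1]
  simp only [key]
  rw [Finset.sum_add_distrib, Finset.sum_add_distrib]
  simp [Finset.sum_ite_eq']
  ring

lemma pchain_quad (hn : 3 ≤ n) (v : Fin n → ℝ) :
    v ⬝ᵥ (pchain n *ᵥ v) = ∑ i, (v i - v (i + 1)) ^ 2 := by
  have e1 : ∑ i, v i * v (i - 1) = ∑ i, v i * v (i + 1) := by
    apply Fintype.sum_equiv (Equiv.subRight (1 : Fin n)) _ _
    intro x; simp [Equiv.subRight, mul_comm]
  have e2 : ∑ i, v (i + 1) ^ 2 = ∑ i, v i ^ 2 :=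
    Fintype.sum_equiv (Equiv.addRight (1 : Fin n)) _ _ (fun x => rfl)
  have lhs : v ⬝ᵥ (pchain n *ᵥ v) =
      ∑ i, (2 * v i ^ 2 - v i * v (i + 1) - v i * v (i - 1)) := by
    rw [dotProduct]
    refine Finset.sum_congr rfl fun i _ => ?_
    rw [pchain_mulVec hn]; ring
  have rhs : ∑ i, (v i - v (i + 1)) ^ 2 =
      ∑ i, (v i ^ 2 + v (i + 1) ^ 2 - 2 * (v i * v (i + 1))) := by
    refine Finset.sum_congr rfl fun i _ => ?_; ring
  rw [lhs, rhs]
  simp only [Finset.sum_sub_distrib, Finset.sum_add_distrib, e1, e2]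
  rw [← Finset.mul_sum, ← Finset.mul_sum]
  ring

lemma pchain_ker (hn : 3 ≤ n) (v : Fin n → ℝ) :
    pchain n *ᵥ v = 0 ↔ ∃ c : ℝ, v = fun _ => c := by
  constructor
  · intro h
    have hq : ∑ i, (v i - v (i + 1)) ^ 2 = 0 := by
      rw [← pchain_quad hn, h, dotProduct_zero]
    have hz : ∀ i : Fin n, (v i - v (i + 1)) ^ 2 = 0 := by
      intro i
      have := (Finset.sum_eq_zero_iff_of_nonneg
        (fun i _ => sq_nonneg (v i - v (i + 1)))).mp hq
      exact this i (Finset.mem_univ i)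
    have hstep : ∀ i : Fin n, v i = v (i + 1) := by
      intro i
      have := pow_eq_zero_iff (n := 2) (by norm_num) |>.mp (hz i)
      linarith [sub_eq_zero.mp this]
    refine ⟨v 0, funext fun j => ?_⟩
    have hnat : ∀ m : ℕ, v ((m : Fin n)) = v 0 := by
      intro m
      induction m with
      | zero => norm_num
      | succ k ih =>
        have : ((k + 1 : ℕ) : Fin n) = ((k : ℕ) : Fin n) + 1 := by push_cast; ring
        rw [this, ← hstep]
        exact ih
    have := hnat j.val
    rwa [Fin.cast_val_eq_self] at this
  · rintro ⟨c, rfl⟩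
    funext i
    rw [Pi.zero_apply, pchain_mulVec hn]
    ring

lemma charpoly_conj' {n : ℕ} (P A B : Matrix (Fin n) (Fin n) ℝ)
    (hPB : P * B = 1) (hBP : B * P = 1) :
    (P * A * B).charpoly = A.charpoly := by
  unfold Matrix.charpoly
  have hc : charmatrix (P * A * B) = P.map C * charmatrix A * B.map C := by
    unfold Matrix.charmatrix
    have hmap : (P * A * B).map (C : ℝ →+* ℝ[X]) = P.map C * A.map C * B.map C := by
      rw [Matrix.map_mul, Matrix.map_mul]
    rw [RingHom.mapMatrix_apply, RingHom.mapMatrix_apply, hmap]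
    have hscal : (scalar (Fin n)) (X : ℝ[X]) = (X : ℝ[X]) • (1 : Matrix (Fin n) (Fin n) ℝ[X]) := by
      rw [Matrix.scalar_apply, Matrix.smul_one_eq_diagonal]
    rw [mul_sub, sub_mul, hscal]
    congr 1
    rw [mul_smul_comm, smul_mul_assoc, mul_one, ← Matrix.map_mul, hPB]
    simp
  rw [hc, det_mul, det_mul, mul_comm, ← mul_assoc, ← det_mul, ← Matrix.map_mul, hBP]
  simp

lemma charpoly_diag' {n : ℕ} (d : Fin n → ℝ) :
    (diagonal d).charpoly = ∏ i, (X - C (d i)) := by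
  unfold Matrix.charpoly Matrix.charmatrix
  rw [RingHom.mapMatrix_apply, Matrix.scalar_apply, Matrix.diagonal_map (map_zero C),
    Matrix.diagonal_sub, det_diagonal]

end Aux

theorem stmt0 (n : ℕ) [NeZero n] (hn : 3 ≤ n) (a : Fin n → ℝ) (ha : ∀ i, 0 < a i) :
    (∀ v : Fin n → ℝ,
      (Matrix.diagonal a * pchain n).mulVec v = 0 ↔ ∃ c : ℝ, v = fun _ => c) ∧
    (∃ μ : Fin (n - 1) → ℝ, (∀ i, 0 < μ i) ∧
      (Matrix.diagonal a * pchain n).charpoly =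
        X * ∏ i : Fin (n - 1), (X - C (μ i))) ∧
    (∃ (P : Matrix (Fin n) (Fin n) ℝ) (d : Fin n → ℝ), IsUnit P.det ∧
      Matrix.diagonal a * pchain n = P * Matrix.diagonal d * P⁻¹) := by
  classical
  -- setup
  set s : Fin n → ℝ := fun i => Real.sqrt (a i) with hs_def
  have hs : ∀ i, 0 < s i := fun i => Real.sqrt_pos.mpr (ha i)
  set B : Matrix (Fin n) (Fin n) ℝ := diagonal s with hB_def
  set B' : Matrix (Fin n) (Fin n) ℝ := diagonal (fun i => (s i)⁻¹) with hB'_def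
  have hBB' : B * B' = 1 := by
    rw [hB_def, hB'_def, diagonal_mul_diagonal]
    ext i j
    rcases eq_or_ne i j with rfl | h
    · simp [mul_inv_cancel₀ (hs i).ne']
    · simp [h]
  have hB'B : B' * B = 1 := by
    rw [hB_def, hB'_def, diagonal_mul_diagonal]
    ext i j
    rcases eq_or_ne i j with rfl | h
    · simp [inv_mul_cancel₀ (hs i).ne']
    · simp [h]
  have hBB : B * B = diagonal a := by
    rw [hB_def, diagonal_mul_diagonal]
    ext i j
    rcases eq_or_ne i j with rfl | h
    · simp [hs_def, Real.mul_self_sqrt (ha i).le]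
    · simp [h]
  set S : Matrix (Fin n) (Fin n) ℝ := B * pchain n * B with hS_def
  have hM : diagonal a * pchain n = B * S * B' := by
    rw [hS_def, ← hBB]
    simp only [Matrix.mul_assoc]
    rw [hBB', Matrix.mul_one]
  -- part 1
  have part1 : ∀ v : Fin n → ℝ,
      (Matrix.diagonal a * pchain n).mulVec v = 0 ↔ ∃ c : ℝ, v = fun _ => c := by
    intro v
    rw [← Matrix.mulVec_mulVec]
    have hzero : diagonal a *ᵥ (pchain n *ᵥ v) = 0 ↔ pchain n *ᵥ v = 0 := by
      constructor
      · intro h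
        funext i
        have := congrFun h i
        rw [Matrix.mulVec_diagonal] at this
        have := mul_eq_zero.mp this
        rcases this with h' | h'
        · exact absurd h' (ha i).ne'
        · exact h'
      · intro h
        rw [h, Matrix.mulVec_zero]
    rw [hzero, pchain_ker hn]
  -- hermitian / posSemidef structure
  have hCh : (pchain n).IsHermitian := by
    ext i j
    simp only [conjTranspose_apply, pchain, of_apply, star_trivial]
    by_cases h : i = j
    · simp [h]
    · simp only [Ne.symm h, h, if_false]
      exact if_congr or_comm rfl rfl
  have hCpsd : (pchain n).PosSemidef := by
    refine Matrix.posSemidef_iff_dotProduct_mulVec.mpr ⟨hCh, fun x => ?_⟩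
    rw [star_trivial, pchain_quad hn]
    positivity
  have hBherm : Bᴴ = B := by
    rw [hB_def, Matrix.diagonal_conjTranspose]
    simp
  have hSpsd : S.PosSemidef := by
    have := hCpsd.mul_mul_conjTranspose_same B
    rwa [hBherm] at this
  have hSh : S.IsHermitian := hSpsd.1
  set lam : Fin n → ℝ := hSh.eigenvalues with hlam_def
  have hlam_nonneg : ∀ i, 0 ≤ lam i := hSpsd.eigenvalues_nonneg
  set U : Matrix (Fin n) (Fin n) ℝ := (hSh.eigenvectorUnitary : Matrix (Fin n) (Fin n) ℝ)
    with hU_def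
  have hUU : U * star U = 1 := (Matrix.mem_unitaryGroup_iff).mp hSh.eigenvectorUnitary.2
  have hUU' : star U * U = 1 := (Matrix.mem_unitaryGroup_iff').mp hSh.eigenvectorUnitary.2
  have hspec : S = U * diagonal lam * star U := by
    have := hSh.spectral_theorem
    rwa [RCLike.ofReal_real_eq_id, Function.id_comp] at this
  -- part 3 : diagonalization
  have hP1 : (B * U) * (star U * B') = 1 := by
    calc (B * U) * (star U * B') = B * (U * star U) * B' := by
          simp only [Matrix.mul_assoc]
      _ = 1 := by rw [hUU, Matrix.mul_one, hBB']
  have hPdet : IsUnit (B * U).det := Matrix.isUnit_det_of_right_inverse hP1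
  have hPinv : (B * U)⁻¹ = star U * B' := Matrix.inv_eq_right_inv hP1
  have part3 : ∃ (P : Matrix (Fin n) (Fin n) ℝ) (d : Fin n → ℝ), IsUnit P.det ∧
      Matrix.diagonal a * pchain n = P * Matrix.diagonal d * P⁻¹ := by
    refine ⟨B * U, lam, hPdet, ?_⟩
    rw [hPinv, hM, hspec]
    simp only [Matrix.mul_assoc]
  -- charpoly
  have hcp : (diagonal a * pchain n).charpoly = ∏ i, (X - C (lam i)) := by
    rw [hM, charpoly_conj' B S B' hBB' hB'B, hspec,
      charpoly_conj' U (diagonal lam) (star U) hUU hUU', charpoly_diag']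
  -- rank computations
  have hdetB : IsUnit B.det := by
    rw [hB_def, det_diagonal]
    exact isUnit_iff_ne_zero.mpr (ne_of_gt (Finset.prod_pos (fun i _ => hs i)))
  have hrankS : S.rank = (pchain n).rank := by
    rw [hS_def, Matrix.rank_mul_eq_left_of_isUnit_det B (B * pchain n) hdetB,
      Matrix.rank_mul_eq_right_of_isUnit_det B (pchain n) hdetB]
  have hone_ne : ((fun _ => (1:ℝ)) : Fin n → ℝ) ≠ 0 := fun h => one_ne_zero (congrFun h 0)
  have hkerC : LinearMap.ker (pchain n).mulVecLin
      = Submodule.span ℝ {((fun _ => (1:ℝ)) : Fin n → ℝ)} := by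
    ext v
    rw [LinearMap.mem_ker, Matrix.mulVecLin_apply, Submodule.mem_span_singleton, pchain_ker hn]
    constructor
    · rintro ⟨c, rfl⟩; exact ⟨c, by funext i; simp⟩
    · rintro ⟨c, hc⟩; exact ⟨c, by funext i; rw [← hc]; simp⟩
  have hrankC : (pchain n).rank + 1 = n := by
    have h1 := LinearMap.finrank_range_add_finrank_ker (pchain n).mulVecLin
    rw [hkerC, finrank_span_singleton hone_ne] at h1
    rw [Matrix.rank]
    simpa using h1
  have hcard_ne : Fintype.card {i // lam i ≠ 0} = n - 1 := by
    have h := hSh.rank_eq_card_non_zero_eigs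
    rw [hrankS] at h
    have h2 : Fintype.card {i // lam i ≠ 0} = (pchain n).rank := by
      rw [h]
    omega
  have hcard_eq : Fintype.card {i // lam i = 0} = 1 := by
    have h1 : Fintype.card {i // ¬ lam i ≠ 0}
        = Fintype.card (Fin n) - Fintype.card {i // lam i ≠ 0} :=
      Fintype.card_subtype_compl _
    have h2 : Fintype.card {i // lam i = 0} = Fintype.card {i // ¬ lam i ≠ 0} :=
      Fintype.card_congr (Equiv.subtypeEquivRight (by intro x; simp))
    rw [Fintype.card_fin] at h1
    omega
  -- part 2
  have part2 : ∃ μ : Fin (n - 1) → ℝ, (∀ i, 0 < μ i) ∧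
      (Matrix.diagonal a * pchain n).charpoly =
        X * ∏ i : Fin (n - 1), (X - C (μ i)) := by
    have e : Fin (n - 1) ≃ {i // lam i ≠ 0} :=
      Fintype.equivOfCardEq (by rw [Fintype.card_fin, hcard_ne])
    refine ⟨fun k => lam (e k), fun k => (hlam_nonneg _).lt_of_ne (Ne.symm (e k).2), ?_⟩
    rw [hcp]
    have hZcard : (Finset.univ.filter (fun i => lam i = 0)).card = 1 := by
      rw [← Fintype.card_subtype]
      exact hcard_eq
    obtain ⟨i0, hi0⟩ := Finset.card_eq_one.mp hZcard
    have hi0mem : i0 ∈ Finset.univ.filter (fun i => lam i = 0) :=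
      hi0 ▸ Finset.mem_singleton_self i0
    have hlam0 : lam i0 = 0 := (Finset.mem_filter.mp hi0mem).2
    rw [← Finset.prod_filter_mul_prod_filter_not Finset.univ (fun i => lam i = 0)
      (fun i => X - C (lam i))]
    congr 1
    · rw [hi0, Finset.prod_singleton, hlam0, map_zero, sub_zero]
    · rw [Finset.prod_subtype (p := fun i => lam i ≠ 0)
        (Finset.univ.filter (fun i => ¬ lam i = 0))
        (by intro x; simp [Ne]) (fun i => X - C (lam i))]
      exact (Fintype.prod_equiv e (fun k => X - C (lam (e k)))
        (fun x => X - C (lam x.1)) (fun k => rfl)).symm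
  exact ⟨part1, part2, part3⟩
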